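/- Let n ≥ 1 be an integer and ψ : ℝⁿ → ℝⁿ a continuously differentiable map. Then the symmetrized Jacobian of ψ vanishes identically, i.e. ∇ψ(x) + (∇ψ(x))ᵀ = 0 for all x ∈ ℝⁿ, if and only if there exist a skew-symmetric n×n real matrix A and a vector b ∈ ℝⁿ such that ψ(x) = A·x + b for all x ∈ ℝⁿ. -/

import Mathlib

open Matrix

private lemma skew_quad {n : ℕ} (M : Fin n → Fin n → ℝ) (h : ∀ i j, M i j = - M j i)
    (v : Fin n → ℝ) : ∑ i, (∑ j, v j * M i j) * v i = 0 := by
  have hMT : ∀ i j, M i j + M j i = 0 := fun i j => by rw [h i j]; ring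
  set S := ∑ i, ∑ j, v j * M i j * v i with hS
  set T := ∑ i, ∑ j, v j * M j i * v i with hT
  have hTS : T = S := by
    rw [hT, Finset.sum_comm, hS]
    refine Finset.sum_congr rfl fun i _ => Finset.sum_congr rfl fun j _ => ?_
    ring
  have hST : S + T = 0 := by
    rw [hS, hT, ← Finset.sum_add_distrib]
    simp only [← Finset.sum_add_distrib]
    have : ∀ i j, v j * M i j * v i + v j * M j i * v i = v j * (M i j + M j i) * v i :=
      fun i j => by ring
    calc ∑ i, ∑ j, (v j * M i j * v i + v j * M j i * v i)
        = ∑ i, ∑ j, v j * (M i j + M j i) * v i :=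
          Finset.sum_congr rfl fun i _ => Finset.sum_congr rfl fun j _ => this i j
      _ = 0 := by
          refine Finset.sum_eq_zero fun i _ => Finset.sum_eq_zero fun j _ => ?_
          rw [hMT i j]; ring
  have hS0 : S = 0 := by rw [hTS] at hST; linarith
  calc ∑ i, (∑ j, v j * M i j) * v i = S := by
        rw [hS]; exact Finset.sum_congr rfl fun i _ => by rw [Finset.sum_mul]
    _ = 0 := hS0

/-- A `C¹` map `ψ : ℝⁿ → ℝⁿ` has identically vanishing symmetrized
Jacobian, i.e. `∂_j ψ^i(x) + ∂_i ψ^j(x) = 0` for all `x, i, j`, if and only if there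
exist a skew-symmetric matrix `A` and a vector `b` with `ψ(x) = A·x + b` for all `x`. -/
theorem rigid_displacement_characterization (n : ℕ) (hn : 1 ≤ n)
    (ψ : (Fin n → ℝ) → (Fin n → ℝ)) (hψ : ContDiff ℝ 1 ψ) :
    (∀ (x : Fin n → ℝ) (i j : Fin n),
        fderiv ℝ ψ x (Pi.single j 1) i + fderiv ℝ ψ x (Pi.single i 1) j = 0)
    ↔ ∃ (A : Matrix (Fin n) (Fin n) ℝ) (b : Fin n → ℝ),
        Aᵀ = -A ∧ ∀ x, ψ x = A.mulVec x + b := by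
  constructor
  · intro H
    have hd : Differentiable ℝ ψ := hψ.differentiable one_ne_zero
    set D : (Fin n → ℝ) → (Fin n → ℝ) →L[ℝ] (Fin n → ℝ) := fun x => fderiv ℝ ψ x with hDdef
    -- expansion of D z v in the standard basis
    have hexp : ∀ z v i, D z v i = ∑ j, v j * D z (Pi.single j 1) i := by
      intro z v i
      have hv : ∑ j, Pi.single j (v j) = v := Finset.univ_sum_single v
      calc D z v i = D z (∑ j, Pi.single j (v j)) i := by rw [hv]
        _ = (∑ j, D z (Pi.single j (v j))) i := by rw [map_sum]
        _ = ∑ j, D z (Pi.single j (v j)) i := by rw [Finset.sum_apply]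
        _ = ∑ j, v j * D z (Pi.single j 1) i := by
            refine Finset.sum_congr rfl fun j _ => ?_
            have h1 : Pi.single j (v j) = v j • (Pi.single j 1 : Fin n → ℝ) := by
              funext k
              rcases eq_or_ne k j with rfl | hkj
              · simp
              · simp [Pi.single_eq_of_ne hkj]
            rw [h1, (D z).map_smul]
            simp
    have hskew : ∀ z i j, D z (Pi.single j 1) i = - D z (Pi.single i 1) j := by
      intro z i j
      have := H z i j
      linarith
    -- ⟨D z v, v⟩ = 0
    have hquad : ∀ z v, ∑ i, (D z v) i * v i = 0 := by
      intro z v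
      calc ∑ i, D z v i * v i = ∑ i, (∑ j, v j * D z (Pi.single j 1) i) * v i :=
            Finset.sum_congr rfl fun i _ => by rw [hexp z v i]
        _ = 0 := skew_quad (fun i j => D z (Pi.single j 1) i) (fun i j => hskew z i j) v
    -- derivative of coordinate functions along lines
    have hline : ∀ (y v : Fin n → ℝ) (i : Fin n) (t : ℝ),
        HasDerivAt (fun s : ℝ => ψ (y + s • v) i) (D (y + t • v) v i) t := by
      intro y v i t
      have hc : HasDerivAt (fun s : ℝ => y + s • v) v t := by
        simpa using ((hasDerivAt_id t).smul_const v).const_add y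
      have h1 : HasDerivAt (fun s : ℝ => ψ (y + s • v)) (D (y + t • v) v) t :=
        (hd (y + t • v)).hasFDerivAt.comp_hasDerivAt t hc
      exact (ContinuousLinearMap.proj (R := ℝ) (φ := fun _ : Fin n => ℝ)
        i).hasFDerivAt.comp_hasDerivAt t h1
    -- Step 1: ⟨ψ x - ψ y, x - y⟩ = 0
    have S1 : ∀ x y, ∑ i, (ψ x i - ψ y i) * (x i - y i) = 0 := by
      intro x y
      have hφ : ∀ t : ℝ, HasDerivAt (fun s : ℝ => ∑ i, (ψ (y + s • (x - y)) i - ψ y i) * (x i - y i))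
          (∑ i, (D (y + t • (x - y)) (x - y) i) * (x i - y i)) t := by
        intro t
        refine HasDerivAt.fun_sum fun i _ => ?_
        exact ((hline y (x - y) i t).sub_const (ψ y i)).mul_const (x i - y i)
      have hdiff : Differentiable ℝ (fun s : ℝ => ∑ i, (ψ (y + s • (x - y)) i - ψ y i) * (x i - y i)) :=
        fun t => (hφ t).differentiableAt
      have hderiv0 : ∀ t : ℝ, deriv (fun s : ℝ => ∑ i, (ψ (y + s • (x - y)) i - ψ y i) * (x i - y i)) t = 0 := by
        intro t
        rw [(hφ t).deriv]
        have := hquad (y + t • (x - y)) (x - y)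
        calc ∑ i, D (y + t • (x - y)) (x - y) i * (x i - y i)
            = ∑ i, D (y + t • (x - y)) (x - y) i * (x - y) i :=
              Finset.sum_congr rfl fun i _ => by rw [Pi.sub_apply]
          _ = 0 := this
      have h10 := is_const_of_deriv_eq_zero hdiff hderiv0 1 0
      have hx1 : y + (1:ℝ) • (x - y) = x := by simp
      have h0 : ∑ i, (ψ (y + (0:ℝ) • (x - y)) i - ψ y i) * (x i - y i) = 0 := by simp
      rw [hx1, h0] at h10
      exact h10
    -- Step 2: differentiate S1 in x
    have S2 : ∀ x y v, ∑ i, D x v i * (x i - y i) + ∑ i, (ψ x i - ψ y i) * v i = 0 := by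
      intro x y v
      set F := fun s : ℝ => ∑ i, (ψ (x + s • v) i - ψ y i) * ((x + s • v) i - y i) with hF
      have hF0 : HasDerivAt F 0 0 := by
        have hz : F = fun _ => (0:ℝ) := by
          funext t
          rw [hF]
          have := S1 (x + t • v) y
          simpa using this
        rw [hz]
        exact hasDerivAt_const 0 0
      have hF1 : HasDerivAt F (∑ i, (D x v i * (x i - y i) + (ψ x i - ψ y i) * v i)) 0 := by
        rw [hF]
        refine HasDerivAt.fun_sum fun i _ => ?_
        have ha : HasDerivAt (fun s : ℝ => ψ (x + s • v) i - ψ y i) (D x v i) 0 := by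
          simpa using (hline x v i 0).sub_const (ψ y i)
        have hb : HasDerivAt (fun s : ℝ => (x + s • v) i - y i) (v i) 0 := by
          have h1 : HasDerivAt (fun s : ℝ => x i + s * v i - y i) (v i) 0 := by
            simpa using (((hasDerivAt_id (0:ℝ)).mul_const (v i)).const_add (x i)).sub_const (y i)
          simpa [Pi.add_apply, Pi.smul_apply, smul_eq_mul] using h1
        have := ha.fun_mul hb
        simpa using this
      have huniq := hF1.unique hF0
      rw [Finset.sum_add_distrib] at huniq
      exact huniq
    -- Step 3: differentiate S2 in y
    have S3 : ∀ x y v w, ∑ i, D x v i * w i + ∑ i, D y w i * v i = 0 := by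
      intro x y v w
      set G := fun t : ℝ => ∑ i, D x v i * (x i - (y + t • w) i) + ∑ i, (ψ x i - ψ (y + t • w) i) * v i with hG
      have hG0 : HasDerivAt G 0 0 := by
        have hz : G = fun _ => (0:ℝ) := funext fun t => S2 x (y + t • w) v
        rw [hz]
        exact hasDerivAt_const 0 0
      have hG1 : HasDerivAt G ((∑ i, D x v i * (-(w i))) + ∑ i, (-(D y w i)) * v i) 0 := by
        rw [hG]
        refine HasDerivAt.add ?_ ?_
        · refine HasDerivAt.fun_sum fun i _ => ?_
          have h1 : HasDerivAt (fun t : ℝ => x i - (y i + t * w i)) (-(w i)) 0 := by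
            simpa using HasDerivAt.const_sub (x i)
              (((hasDerivAt_id (0:ℝ)).mul_const (w i)).const_add (y i))
          have h2 := h1.const_mul (D x v i)
          simpa [Pi.add_apply, Pi.smul_apply, smul_eq_mul] using h2
        · refine HasDerivAt.fun_sum fun i _ => ?_
          have h1 := (HasDerivAt.const_sub (ψ x i) (hline y w i 0)).mul_const (v i)
          simpa using h1
      have huniq := hG1.unique hG0
      have e1 : ∑ i, D x v i * (-(w i)) = -∑ i, D x v i * w i := by
        rw [← Finset.sum_neg_distrib]
        exact Finset.sum_congr rfl fun i _ => by ring
      have e2 : ∑ i, (-(D y w i)) * v i = -∑ i, D y w i * v i := by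
        rw [← Finset.sum_neg_distrib]
        exact Finset.sum_congr rfl fun i _ => by ring
      rw [e1, e2] at huniq
      linarith
    -- Step 4: D is constant
    have Dconst : ∀ x, D x = D 0 := by
      intro x
      refine ContinuousLinearMap.ext fun v => funext fun j => ?_
      have h1 := S3 x 0 v (Pi.single j 1)
      have hl : ∑ i, D x v i * (Pi.single j 1 : Fin n → ℝ) i = D x v j := by
        simp [Pi.single_apply]
      have hr : ∑ i, D 0 (Pi.single j 1) i * v i = - D 0 v j := by
        have h2 : ∀ i, D 0 (Pi.single j 1) i * v i = -(v i * D 0 (Pi.single i 1) j) := by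
          intro i
          rw [hskew 0 i j]; ring
        calc ∑ i, D 0 (Pi.single j 1) i * v i
            = ∑ i, -(v i * D 0 (Pi.single i 1) j) := Finset.sum_congr rfl fun i _ => h2 i
          _ = -∑ i, v i * D 0 (Pi.single i 1) j := by rw [← Finset.sum_neg_distrib]
          _ = - D 0 v j := by rw [← hexp 0 v j]
      rw [hl, hr] at h1
      show D x v j = D 0 v j
      linarith
    -- Step 5: ψ is affine
    have hgd : Differentiable ℝ (fun x => ψ x - D 0 x) :=
      hd.sub (D 0).differentiable
    have hgf : ∀ x, fderiv ℝ (fun x => ψ x - D 0 x) x = 0 := by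
      intro x
      have h1 : HasFDerivAt (fun x => ψ x - D 0 x) (D x - D 0) x :=
        (hd x).hasFDerivAt.sub (D 0).hasFDerivAt
      rw [h1.fderiv, Dconst x]
      simp
    have hc := is_const_of_fderiv_eq_zero hgd hgf
    refine ⟨Matrix.of (fun i j => D 0 (Pi.single j 1) i), ψ 0, ?_, ?_⟩
    · ext i j
      have := H 0 i j
      simp only [Matrix.transpose_apply, Matrix.neg_apply, Matrix.of_apply]
      linarith
    · intro x
      have hx := hc x 0
      simp only [map_zero, sub_zero] at hx
      funext i
      have hxi := congrFun hx i
      simp only [Pi.sub_apply] at hxi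
      have : ψ x i = D 0 x i + ψ 0 i := by linarith
      rw [this]
      have hmv : (Matrix.of (fun i j => D 0 (Pi.single j 1) i)).mulVec x i = D 0 x i := by
        rw [hexp 0 x i]
        simp [Matrix.mulVec, dotProduct, mul_comm]
      rw [Pi.add_apply, hmv]
  · rintro ⟨A, b, hA, hAb⟩ x i j
    have hψx : ψ = fun x => A.mulVecLin x + b := by
      funext z
      rw [hAb z]
      rfl
    have hfd : HasFDerivAt ψ (LinearMap.toContinuousLinearMap (Matrix.mulVecLin A)) x := by
      rw [hψx]
      exact (LinearMap.toContinuousLinearMap (Matrix.mulVecLin A)).hasFDerivAt.add_const b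
    rw [hfd.fderiv]
    have hcoe : ∀ v : Fin n → ℝ, (LinearMap.toContinuousLinearMap (Matrix.mulVecLin A)) v
        = A.mulVec v := fun v => rfl
    rw [hcoe, hcoe]
    have h1 : A.mulVec (Pi.single j 1) i = A i j := by
      simp [Matrix.mulVec, dotProduct, Pi.single_apply]
    have h2 : A.mulVec (Pi.single i 1) j = A j i := by
      simp [Matrix.mulVec, dotProduct, Pi.single_apply]
    rw [h1, h2]
    have h3 := congrFun (congrFun hA i) j
    simp only [Matrix.transpose_apply, Matrix.neg_apply] at h3
    linarith
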